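/- If G is a primitive sublattice of an even unimodular lattice Γ with orthogonal complement G⊥, then the natural map D(G) → D(G⊥) induced by projection in Γ ⊗ ℚ is a group isomorphism reversing the discriminant quadratic forms: (D(G), q̄) ≅ (D(G⊥), −q̄). -/

import Mathlib

/-- The orthogonal complement of the sublattice `G` inside the lattice `Γ`. -/
def perpIn {V : Type*} [AddCommGroup V] [Module ℚ V]
    (B : V →ₗ[ℚ] V →ₗ[ℚ] ℚ) (Γ G : Submodule ℤ V) : Set V :=
  {y | y ∈ Γ ∧ ∀ x ∈ G, B y x = 0}

/-- The dual lattice of a set `S` inside the `ℚ`-span of `S`. -/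
def dualOfSet {V : Type*} [AddCommGroup V] [Module ℚ V]
    (B : V →ₗ[ℚ] V →ₗ[ℚ] ℚ) (S : Set V) : Set V :=
  {v | v ∈ Submodule.span ℚ S ∧ ∀ x ∈ S, ∃ n : ℤ, B v x = (n : ℚ)}

/-- The dual lattice of `L` inside the `ℚ`-span of `L`, as a set. -/
def dualSet {V : Type*} [AddCommGroup V] [Module ℚ V]
    (B : V →ₗ[ℚ] V →ₗ[ℚ] ℚ) (L : Submodule ℤ V) : Set V :=
  dualOfSet B (L : Set V)

open Submodule

section Key
variable {V : Type*} [AddCommGroup V] [Module ℚ V] [FiniteDimensional ℚ V]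
variable (B : V →ₗ[ℚ] V →ₗ[ℚ] ℚ)

/-- The lattice `Γ` is finitely generated over `ℤ`. -/
lemma nik_finite (hnd : ∀ v : V, (∀ w, B v w = 0) → v = 0)
    (Γ : Submodule ℤ V) (hspan : Submodule.span ℚ (Γ : Set V) = ⊤)
    (hint : ∀ x ∈ Γ, ∀ y ∈ Γ, ∃ n : ℤ, B x y = (n : ℚ)) :
    Module.Finite ℤ ↥Γ := by
  obtain ⟨s, hsΓ, hsspan, hsind⟩ := exists_linearIndependent ℚ (Γ : Set V)
  haveI : Finite ↥s := hsind.finite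
  haveI : Fintype ↥s := Fintype.ofFinite _
  haveI : DecidableEq ↥s := Classical.decEq _
  set M : Submodule ℤ (↥s → ℚ) := span ℤ (Set.range fun i : ↥s => Pi.single i (1 : ℚ)) with hM
  haveI : IsNoetherian ℤ ↥M :=
    isNoetherian_of_fg_of_noetherian _ (Submodule.fg_span (Set.finite_range _))
  let T : ↥Γ →ₗ[ℤ] (↥s → ℚ) :=
    LinearMap.pi fun i : ↥s => ((B.flip (i : V)).restrictScalars ℤ).comp Γ.subtype
  have hTapp : ∀ (x : ↥Γ) (i : ↥s), T x i = B (x : V) (i : V) := by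
    intro x i
    simp [T, LinearMap.pi_apply]
  have hTM : ∀ x : ↥Γ, T x ∈ M := by
    intro x
    have hex : ∀ i : ↥s, ∃ n : ℤ, B (x : V) (i : V) = (n : ℚ) := fun i => hint _ x.2 _ (hsΓ i.2)
    choose n hn using hex
    have : T x = ∑ i : ↥s, n i • Pi.single i (1 : ℚ) := by
      funext j
      rw [hTapp, hn j]
      rw [Finset.sum_apply]
      simp [Pi.single_apply, apply_ite]
    rw [this]
    exact Submodule.sum_mem _ fun i _ => Submodule.smul_mem _ _ (subset_span ⟨i, rfl⟩)
  have hTinj : Function.Injective T := by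
    intro x y hxy
    have hz : ∀ z ∈ s, B ((x : V) - (y : V)) z = 0 := by
      intro z hz'
      have h1 := congrFun hxy (⟨z, hz'⟩ : ↥s)
      rw [hTapp, hTapp] at h1
      simp [map_sub, LinearMap.sub_apply, h1]
    have hxy0 : ((x : V) - y) = 0 := by
      apply hnd
      intro w
      have hw : w ∈ span ℚ s := by rw [hsspan, hspan]; trivial
      have hle : span ℚ s ≤ LinearMap.ker (B ((x : V) - y)) :=
        span_le.2 fun z hz' => by simpa [LinearMap.mem_ker] using hz z hz'
      simpa using hle hw
    exact Subtype.ext (sub_eq_zero.1 hxy0)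
  let T' : ↥Γ →ₗ[ℤ] ↥M := T.codRestrict M hTM
  have hT'inj : Function.Injective T' := fun x y h => hTinj (congrArg Subtype.val h)
  haveI : IsNoetherian ℤ ↥Γ := isNoetherian_of_injective T' hT'inj
  exact ⟨IsNoetherian.noetherian ⊤⟩

/-- Extension lemma: every `v` pairing integrally with a primitive sublattice `G`
agrees on `G` with some element of the unimodular lattice `Γ`. -/
lemma nik_ext (hnd : ∀ v : V, (∀ w, B v w = 0) → v = 0)
    (Γ : Submodule ℤ V) (hspan : Submodule.span ℚ (Γ : Set V) = ⊤)
    (hint : ∀ x ∈ Γ, ∀ y ∈ Γ, ∃ n : ℤ, B x y = (n : ℚ))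
    (hunimod : dualSet B Γ = (Γ : Set V))
    (G : Submodule ℤ V) (hGΓ : G ≤ Γ)
    (hprim : ∀ x ∈ Γ, ∀ n : ℤ, n ≠ 0 → n • x ∈ G → x ∈ G)
    (v : V) (hv : ∀ g ∈ G, ∃ n : ℤ, B v g = (n : ℚ)) :
    ∃ u ∈ Γ, ∀ g ∈ G, B u g = B v g := by
  haveI : Module.Finite ℤ ↥Γ := nik_finite B hnd Γ hspan hint
  haveI : NoZeroSMulDivisors ℤ V := ⟨fun {c x} h => by
    rw [← Int.cast_smul_eq_zsmul ℚ] at h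
    rcases smul_eq_zero.1 h with h | h
    · left; exact_mod_cast h
    · right; exact h⟩
  set G' : Submodule ℤ ↥Γ := G.comap Γ.subtype with hG'
  have hmemG' : ∀ x : ↥Γ, x ∈ G' ↔ (x : V) ∈ G := by
    intro x; simp [hG', Submodule.mem_comap]
  haveI : Module.Finite ℤ (↥Γ ⧸ G') :=
    Module.Finite.of_surjective G'.mkQ (Submodule.mkQ_surjective G')
  haveI : NoZeroSMulDivisors ℤ (↥Γ ⧸ G') := by
    refine ⟨fun {c x} h => ?_⟩
    by_cases hc : c = 0
    · exact Or.inl hc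
    right
    obtain ⟨y, rfl⟩ := Submodule.mkQ_surjective G' x
    rw [← map_smul, Submodule.mkQ_apply, Submodule.Quotient.mk_eq_zero] at h
    have h2 : ((c • y : ↥Γ) : V) ∈ G := (hmemG' _).1 h
    have hy : (y : V) ∈ G := hprim _ y.2 c hc (by simpa using h2)
    rw [Submodule.mkQ_apply, Submodule.Quotient.mk_eq_zero]
    exact (hmemG' _).2 hy
  haveI : Module.Free ℤ (↥Γ ⧸ G') := Module.free_of_finite_type_torsion_free'
  obtain ⟨sec, hsec⟩ := Module.projective_lifting_property G'.mkQ LinearMap.id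
    (Submodule.mkQ_surjective G')
  have hsec' : ∀ z, G'.mkQ (sec z) = z := fun z => LinearMap.congr_fun hsec z
  set ρ : ↥Γ →ₗ[ℤ] ↥Γ := LinearMap.id - sec ∘ₗ G'.mkQ with hρ
  have hρG : ∀ x : ↥Γ, (ρ x : V) ∈ G := by
    intro x
    have h0 : G'.mkQ (ρ x) = 0 := by
      simp [hρ, map_sub, hsec']
    rw [Submodule.mkQ_apply, Submodule.Quotient.mk_eq_zero] at h0
    exact (hmemG' _).1 h0
  have hρid : ∀ (x : ↥Γ), (x : V) ∈ G → ρ x = x := by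
    intro x hx
    have h0 : G'.mkQ x = 0 := by
      rw [Submodule.mkQ_apply, Submodule.Quotient.mk_eq_zero]
      exact (hmemG' _).2 hx
    simp [hρ, h0]
  haveI : Module.Free ℤ ↥Γ := Module.free_of_finite_type_torsion_free'
  set b : Module.Basis (Module.Free.ChooseBasisIndex ℤ ↥Γ) ℤ ↥Γ := Module.Free.chooseBasis ℤ ↥Γ with hb
  have hbind : LinearIndependent ℚ (fun i => ((b i : ↥Γ) : V)) := by
    have h1 : LinearIndependent ℤ (Γ.subtype ∘ b) :=
      b.linearIndependent.map' Γ.subtype (Submodule.ker_subtype Γ)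
    exact (LinearIndependent.iff_fractionRing ℤ ℚ).1 h1
  have hbspan : ⊤ ≤ span ℚ (Set.range fun i => ((b i : ↥Γ) : V)) := by
    rw [← hspan, span_le]
    intro x hx
    have hx1 : (⟨x, hx⟩ : ↥Γ) ∈ span ℤ (Set.range b) := by rw [b.span_eq]; trivial
    have hx2 : x ∈ Submodule.map Γ.subtype (span ℤ (Set.range b)) := ⟨⟨x, hx⟩, hx1, rfl⟩
    rw [Submodule.map_span] at hx2
    have hx3 : x ∈ span ℤ (Set.range fun i => ((b i : ↥Γ) : V)) := by
      convert hx2 using 2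
      rw [← Set.range_comp]
      rfl
    exact Submodule.span_subset_span ℤ ℚ _ hx3
  set vB : Module.Basis (Module.Free.ChooseBasisIndex ℤ ↥Γ) ℚ V := Module.Basis.mk hbind hbspan with hvB
  set F : V →ₗ[ℚ] ℚ := vB.constr ℚ (fun i => B v ((ρ (b i) : ↥Γ) : V)) with hFdef
  have hF : ∀ x : ↥Γ, F x = B v ((ρ x : ↥Γ) : V) := by
    have heq : (F.restrictScalars ℤ).comp Γ.subtype
        = ((B v).restrictScalars ℤ).comp (Γ.subtype.comp ρ) := by
      refine b.ext fun i => ?_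
      simp only [LinearMap.coe_comp, Function.comp_apply, LinearMap.coe_restrictScalars,
        Submodule.coe_subtype]
      rw [show ((b i : ↥Γ) : V) = vB i from (Module.Basis.mk_apply hbind hbspan i).symm, hFdef]
      exact vB.constr_basis ℚ _ i
    intro x
    exact LinearMap.congr_fun heq x
  have hnd' : LinearMap.BilinForm.Nondegenerate B :=
    LinearMap.BilinForm.Nondegenerate.ofSeparatingLeft fun x hx => hnd x hx
  set u := (LinearMap.BilinForm.toDual B hnd').symm F with hu
  have hu' : ∀ w : V, B u w = F w := fun w =>
    LinearMap.BilinForm.apply_toDual_symm_apply F w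
  have huΓ : u ∈ Γ := by
    have hdual : u ∈ dualSet B Γ := by
      refine ⟨by rw [hspan]; trivial, ?_⟩
      intro x hx
      obtain ⟨n, hn⟩ := hv ((ρ ⟨x, hx⟩ : ↥Γ) : V) (hρG ⟨x, hx⟩)
      exact ⟨n, by rw [hu' x, hF ⟨x, hx⟩, hn]⟩
    rw [hunimod] at hdual
    exact hdual
  refine ⟨u, huΓ, ?_⟩
  intro g hg
  rw [hu' g, hF ⟨g, hGΓ hg⟩, hρid ⟨g, hGΓ hg⟩ hg]

end Key

open Submodule

section Aux
variable {V : Type*} [AddCommGroup V] [Module ℚ V]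
variable (B : V →ₗ[ℚ] V →ₗ[ℚ] ℚ)

/-- Clearing denominators. -/
lemma nik_denom (L : Submodule ℤ V) {x : V} (hx : x ∈ Submodule.span ℚ (L : Set V)) :
    ∃ m : ℤ, m ≠ 0 ∧ (m : ℚ) • x ∈ L := by
  induction hx using Submodule.span_induction with
  | mem y hy => exact ⟨1, one_ne_zero, by simpa using hy⟩
  | zero => exact ⟨1, one_ne_zero, by simpa using L.zero_mem⟩
  | add y z _ _ hy hz =>
      obtain ⟨m, hm, hmy⟩ := hy
      obtain ⟨k, hk, hkz⟩ := hz
      refine ⟨m * k, mul_ne_zero hm hk, ?_⟩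
      have e : ((m * k : ℤ) : ℚ) • (y + z)
          = (k : ℤ) • ((m : ℚ) • y) + (m : ℤ) • ((k : ℚ) • z) := by
        rw [← Int.cast_smul_eq_zsmul ℚ, ← Int.cast_smul_eq_zsmul ℚ]
        push_cast
        module
      rw [e]
      exact L.add_mem (L.smul_mem _ hmy) (L.smul_mem _ hkz)
  | smul q y _ hy =>
      obtain ⟨m, hm, hmy⟩ := hy
      refine ⟨(q.den : ℤ) * m, mul_ne_zero (by exact_mod_cast q.den_nz) hm, ?_⟩
      have hq : (q.den : ℚ) * q = (q.num : ℚ) := by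
        rw [mul_comm]
        exact_mod_cast Rat.mul_den_eq_num q
      have e : (((q.den : ℤ) * m : ℤ) : ℚ) • (q • y) = q.num • ((m : ℚ) • y) := by
        rw [← Int.cast_smul_eq_zsmul ℚ, smul_smul, smul_smul]
        congr 1
        push_cast
        linear_combination (m : ℚ) * hq
      rw [e]
      exact L.smul_mem _ hmy

/-- Evenness implies integrality of the pairing. -/
lemma nik_int (hsym : ∀ x y, B x y = B y x) {Γ : Submodule ℤ V}
    (heven : ∀ x ∈ Γ, ∃ n : ℤ, B x x = 2 * (n : ℚ)) :
    ∀ x ∈ Γ, ∀ y ∈ Γ, ∃ n : ℤ, B x y = (n : ℚ) := by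
  intro x hx y hy
  obtain ⟨a, ha⟩ := heven (x + y) (Γ.add_mem hx hy)
  obtain ⟨b, hb⟩ := heven x hx
  obtain ⟨c, hc⟩ := heven y hy
  refine ⟨a - b - c, ?_⟩
  have e : B (x + y) (x + y) = B x x + B x y + B y x + B y y := by
    simp [map_add, LinearMap.add_apply]; ring
  have hs := hsym x y
  push_cast
  linarith [e, ha, hb, hc]

/-- Orthogonality extends to spans. -/
lemma nik_span_ortho {S T : Set V} (h : ∀ x ∈ S, ∀ y ∈ T, B x y = 0) :
    ∀ v ∈ span ℚ S, ∀ w ∈ span ℚ T, B v w = 0 := by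
  have h1 : ∀ y ∈ T, ∀ v ∈ span ℚ S, B v y = 0 := by
    intro y hy v hv
    have : span ℚ S ≤ LinearMap.ker (B.flip y) :=
      span_le.2 fun x hx => by simpa [LinearMap.mem_ker] using h x hx y hy
    simpa using this hv
  intro v hv w hw
  have : span ℚ T ≤ LinearMap.ker (B v) :=
    span_le.2 fun y hy => by simpa [LinearMap.mem_ker] using h1 y hy v hv
  simpa using this hw

end Aux


/-- Nikulin: if `G` is a primitive nondegenerate sublattice of an even unimodular
lattice `Γ` with orthogonal complement `G⊥`, then the natural correspondence induced by
`Γ` (pairing `v ∈ G∨` with `w ∈ (G⊥)∨` whenever `v + w ∈ Γ`) is a group isomorphism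
`D(G) ≅ D(G⊥)` reversing the discriminant quadratic forms. -/
theorem stmt_15 (V : Type*) [AddCommGroup V] [Module ℚ V] [FiniteDimensional ℚ V]
    (B : V →ₗ[ℚ] V →ₗ[ℚ] ℚ) (hsym : ∀ x y, B x y = B y x)
    (hnd : ∀ v : V, (∀ w, B v w = 0) → v = 0)
    (Γ : Submodule ℤ V) (hspan : Submodule.span ℚ (Γ : Set V) = ⊤)
    (heven : ∀ x ∈ Γ, ∃ n : ℤ, B x x = 2 * (n : ℚ))
    (hunimod : dualSet B Γ = (Γ : Set V))
    (G : Submodule ℤ V) (hGΓ : G ≤ Γ)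
    (hprim : ∀ x ∈ Γ, ∀ n : ℤ, n ≠ 0 → n • x ∈ G → x ∈ G)
    (hndG : ∀ v ∈ Submodule.span ℚ (G : Set V),
      (∀ w ∈ Submodule.span ℚ (G : Set V), B v w = 0) → v = 0) :
    -- the correspondence is defined on all of D(G)
    (∀ v ∈ dualSet B G, ∃ w ∈ dualOfSet B (perpIn B Γ G), v + w ∈ Γ) ∧
    -- surjectivity onto D(G⊥)
    (∀ w ∈ dualOfSet B (perpIn B Γ G), ∃ v ∈ dualSet B G, v + w ∈ Γ) ∧
    -- well-definedness and injectivity on discriminant classes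
    (∀ v ∈ dualSet B G, ∀ v' ∈ dualSet B G,
      ∀ w ∈ dualOfSet B (perpIn B Γ G), ∀ w' ∈ dualOfSet B (perpIn B Γ G),
      v + w ∈ Γ → v' + w' ∈ Γ →
        ((v - v' ∈ G) ↔ (∃ y ∈ perpIn B Γ G, w - w' = y))) ∧
    -- the isomorphism reverses the discriminant quadratic forms
    (∀ v ∈ dualSet B G, ∀ w ∈ dualOfSet B (perpIn B Γ G), v + w ∈ Γ →
      ∃ n : ℤ, B w w + B v v = 2 * (n : ℚ)) := by
  classical
  have hint : ∀ x ∈ Γ, ∀ y ∈ Γ, ∃ n : ℤ, B x y = (n : ℚ) := nik_int B hsym heven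
  set W : Submodule ℚ V := Submodule.span ℚ (G : Set V) with hW
  set P : Set V := perpIn B Γ G with hP
  have hGP0 : ∀ g ∈ (G : Set V), ∀ y ∈ P, B g y = 0 := fun g hg y hy => by
    rw [hsym]; exact hy.2 g hg
  have hWP : ∀ a ∈ W, ∀ t ∈ Submodule.span ℚ P, B a t = 0 := nik_span_ortho B hGP0
  -- `P` as a `ℤ`-submodule
  set Psub : Submodule ℤ V :=
    { carrier := P
      add_mem' := by
        rintro x y ⟨hxΓ, hx⟩ ⟨hyΓ, hy⟩
        exact ⟨Γ.add_mem hxΓ hyΓ, fun g hg => by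
          rw [map_add, LinearMap.add_apply, hx g hg, hy g hg, add_zero]⟩
      zero_mem' := ⟨Γ.zero_mem, fun g hg => by simp⟩
      smul_mem' := by
        rintro c x ⟨hxΓ, hx⟩
        refine ⟨Γ.smul_mem c hxΓ, fun g hg => ?_⟩
        rw [← Int.cast_smul_eq_zsmul ℚ, map_smul, LinearMap.smul_apply, hx g hg, smul_zero] }
    with hPsub
  have hPΓ : Psub ≤ Γ := fun x hx => hx.1
  -- the bilinear form is reflexive and nondegenerate on W
  have hrefl : LinearMap.BilinForm.IsRefl B := fun x y h => by rw [hsym]; exact h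
  have hres : (LinearMap.BilinForm.restrict B W).Nondegenerate := by
    constructor <;> rintro ⟨x, hx⟩ h
    all_goals refine Subtype.ext (hndG x hx fun w hw => ?_)
    all_goals simpa [hsym w x] using h ⟨w, hw⟩
  have hcompl : IsCompl W (LinearMap.BilinForm.orthogonal B W) :=
    LinearMap.BilinForm.isCompl_orthogonal_of_restrict_nondegenerate hrefl hres
  set O : Submodule ℚ V := LinearMap.BilinForm.orthogonal B W with hO
  have hmemO : ∀ x, x ∈ O ↔ ∀ n ∈ W, B n x = 0 := fun x => Iff.rfl
  have hPO : Submodule.span ℚ P ≤ O := by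
    rw [Submodule.span_le]
    intro y hy
    rw [SetLike.mem_coe, hmemO]
    intro n hn
    have hle : W ≤ LinearMap.ker (B.flip y) :=
      Submodule.span_le.2 fun g hg => by
        simp only [LinearMap.mem_ker, SetLike.mem_coe, LinearMap.flip_apply]
        exact hGP0 g hg y hy
    simpa using hle hn
  have hOP : (O : Set V) ⊆ Submodule.span ℚ P := by
    intro u hu
    have huV : u ∈ Submodule.span ℚ (Γ : Set V) := by rw [hspan]; trivial
    obtain ⟨m, hm, hmu⟩ := nik_denom Γ huV
    have hBug : ∀ g ∈ G, B u g = 0 := fun g hg => by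
      rw [hsym]; exact ((hmemO u).1 hu) g (Submodule.subset_span hg)
    have hmem : (m : ℚ) • u ∈ P := ⟨hmu, fun g hg => by
      rw [map_smul, LinearMap.smul_apply, hBug g hg, smul_zero]⟩
    have hrw : u = (m : ℚ)⁻¹ • ((m : ℚ) • u) := by
      rw [inv_smul_smul₀ (by exact_mod_cast hm)]
    rw [hrw]
    exact Submodule.smul_mem _ _ (Submodule.subset_span hmem)
  refine ⟨?_, ?_, ?_, ?_⟩
  -- Part 1
  · rintro v ⟨hv1, hv2⟩
    obtain ⟨u, huΓ, hu⟩ := nik_ext B hnd Γ hspan hint hunimod G hGΓ hprim v hv2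
    have h3 : ∀ g ∈ G, B (u - v) g = 0 := fun g hg => by
      rw [map_sub, LinearMap.sub_apply, hu g hg, sub_self]
    have hmemOuv : u - v ∈ O := by
      rw [hmemO]
      intro n hn
      have h4 : W ≤ LinearMap.ker (B (u - v)) :=
        Submodule.span_le.2 fun g hg => by
          simp only [LinearMap.mem_ker, SetLike.mem_coe]
          exact h3 g hg
      rw [hsym]
      simpa using h4 hn
    refine ⟨u - v, ⟨hOP hmemOuv, fun y hy => ?_⟩, by rwa [add_sub_cancel]⟩
    obtain ⟨n, hn⟩ := hint u huΓ y hy.1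
    refine ⟨n, ?_⟩
    rw [map_sub, LinearMap.sub_apply, hn, hWP v hv1 y (Submodule.subset_span hy), sub_zero]
  -- Part 2
  · rintro w ⟨hw1, hw2⟩
    have hprimP : ∀ x ∈ Γ, ∀ n : ℤ, n ≠ 0 → n • x ∈ Psub → x ∈ Psub := by
      intro x hx n hn hnx
      refine ⟨hx, fun g hg => ?_⟩
      have h0 : B (n • x) g = 0 := hnx.2 g hg
      rw [← Int.cast_smul_eq_zsmul ℚ, map_smul, LinearMap.smul_apply] at h0
      have hn' : (n : ℚ) ≠ 0 := by exact_mod_cast hn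
      simpa [hn'] using h0
    obtain ⟨u, huΓ, hu⟩ := nik_ext B hnd Γ hspan hint hunimod Psub hPΓ hprimP w hw2
    have hvy : ∀ y ∈ P, B (u - w) y = 0 := fun y hy => by
      rw [map_sub, LinearMap.sub_apply, hu y hy, sub_self]
    have hvT : ∀ t ∈ Submodule.span ℚ P, B (u - w) t = 0 := by
      intro t ht
      have hle : Submodule.span ℚ P ≤ LinearMap.ker (B (u - w)) :=
        Submodule.span_le.2 fun y hy => by
          simp only [LinearMap.mem_ker, SetLike.mem_coe]
          exact hvy y hy
      simpa using hle ht
    have hsup : u - w ∈ W ⊔ O := by rw [hcompl.sup_eq_top]; trivial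
    obtain ⟨a, ha, c, hc, hac⟩ := Submodule.mem_sup.1 hsup
    have hc0 : c = 0 := by
      apply hnd
      intro t
      have htop : t ∈ W ⊔ O := by rw [hcompl.sup_eq_top]; trivial
      obtain ⟨p, hp, q, hq, hpq⟩ := Submodule.mem_sup.1 htop
      have h1 : B c p = 0 := by rw [hsym]; exact ((hmemO c).1 hc) p hp
      have h2 : B c q = 0 := by
        have hcv : c = (u - w) - a := by rw [← hac]; abel
        have hq' : q ∈ Submodule.span ℚ P := hOP hq
        rw [hcv, map_sub, LinearMap.sub_apply, hvT q hq', hWP a ha q hq', sub_self]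
      rw [← hpq, map_add, h1, h2, add_zero]
    have hauw : u - w = a := by rw [← hac, hc0, add_zero]
    refine ⟨u - w, ⟨by rw [hauw]; exact ha, fun g hg => ?_⟩, by rwa [sub_add_cancel]⟩
    obtain ⟨n, hn⟩ := hint u huΓ g (hGΓ hg)
    refine ⟨n, ?_⟩
    have hwg : B w g = 0 := by
      rw [hsym]; exact hWP g (Submodule.subset_span hg) w hw1
    rw [map_sub, LinearMap.sub_apply, hn, hwg, sub_zero]
  -- Part 3
  · rintro v ⟨hv1, _⟩ v' ⟨hv'1, _⟩ w ⟨hw1, _⟩ w' ⟨hw'1, _⟩ hvw hv'w'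
    constructor
    · intro h
      have hdiff : w - w' = ((v + w) - (v' + w')) - (v - v') := by abel
      have hmemΓ : w - w' ∈ Γ := by
        rw [hdiff]; exact Γ.sub_mem (Γ.sub_mem hvw hv'w') (hGΓ h)
      refine ⟨w - w', ⟨hmemΓ, fun g hg => ?_⟩, rfl⟩
      have h2 : B w g = 0 := by
        rw [hsym]; exact hWP g (Submodule.subset_span hg) w hw1
      have h3 : B w' g = 0 := by
        rw [hsym]; exact hWP g (Submodule.subset_span hg) w' hw'1
      rw [map_sub, LinearMap.sub_apply, h2, h3, sub_self]
    · rintro ⟨y, hy, hwy⟩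
      have hdiff : v - v' = ((v + w) - (v' + w')) - (w - w') := by abel
      have hmemΓ : v - v' ∈ Γ := by
        rw [hdiff, hwy]; exact Γ.sub_mem (Γ.sub_mem hvw hv'w') hy.1
      obtain ⟨m, hm, hmv⟩ := nik_denom G (Submodule.sub_mem _ hv1 hv'1)
      exact hprim _ hmemΓ m hm (by rwa [Int.cast_smul_eq_zsmul ℚ] at hmv)
  -- Part 4
  · rintro v ⟨hv1, _⟩ w ⟨hw1, _⟩ hvw
    obtain ⟨n, hn⟩ := heven (v + w) hvw
    refine ⟨n, ?_⟩
    have h0 : B v w = 0 := hWP v hv1 w hw1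
    have h0' : B w v = 0 := by rw [hsym]; exact h0
    have e : B (v + w) (v + w) = B v v + B v w + B w v + B w w := by
      simp only [map_add, LinearMap.add_apply]; ring
    linarith [hn, e]
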